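/- Let Q be a quiver, G a group, and δ: Q₁ → G an arrow weighting determining a G-grading of the path coalgebra kQ. The linear map E: kQ ⋊ kG → k(Q ⋊ G) sending p ⋊ g, for a path p = a_n⋯a₂a₁ and g ∈ G, to the path (a_n ⋊ δ(a_{n-1}⋯a₁)g)⋯(a₂ ⋊ δ(a₁)g)(a₁ ⋊ g) in the smash coproduct quiver (and x ⋊ g to the vertex x ⋊ g), is an isomorphism of coalgebras. -/

import Mathlib

open TensorProduct Quiver

noncomputable section
open scoped Classical

universe u v

variable (k : Type*) [Field k]

/-- The set of all paths in a quiver, with endpoints bundled. -/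
abbrev PathsIn (V : Type u) [Quiver.{v + 1} V] : Type (max u (v + 1)) := Σ a b : V, Quiver.Path a b

/-- The underlying vector space of the path coalgebra: the free `k`-module on paths. -/
abbrev PathCoalg (V : Type u) [Quiver.{v + 1} V] : Type _ := PathsIn V →₀ k

variable {V : Type u} [Quiver.{v + 1} V]

/-- The basis vector corresponding to a path. -/
def ιp (t : PathsIn V) : PathCoalg k V := Finsupp.single t 1

/-- The linear map on the path coalgebra induced by appending the arrow `e` to
paths ending at the source of `e` (and killing all other paths). -/
def consMap {b c : V} (e : b ⟶ c) : PathCoalg k V →ₗ[k] PathCoalg k V :=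
  Finsupp.lsum k fun t =>
    if h : t.2.1 = b then Finsupp.lsingle ⟨t.1, c, (h ▸ t.2.2).cons e⟩ else 0

/-- Comultiplication on basis paths:
`Δ(p) = Σ_{p = p₂p₁} p₂ ⊗ p₁ + t(p) ⊗ p + p ⊗ s(p)`, i.e. the sum of
`(second segment) ⊗ (first segment)` over all (possibly trivial) decompositions. -/
def deltaAux : ∀ {a b : V}, Quiver.Path a b → PathCoalg k V ⊗[k] PathCoalg k V
  | a, _, .nil => ιp k ⟨a, a, .nil⟩ ⊗ₜ[k] ιp k ⟨a, a, .nil⟩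
  | a, c, .cons p e =>
      ιp k ⟨c, c, .nil⟩ ⊗ₜ[k] ιp k ⟨a, c, p.cons e⟩
      + TensorProduct.map (consMap k e) LinearMap.id (deltaAux p)

/-- The comultiplication of the path coalgebra. -/
def ΔP : PathCoalg k V →ₗ[k] PathCoalg k V ⊗[k] PathCoalg k V :=
  Finsupp.lsum k fun t => LinearMap.toSpanSingleton k _ (deltaAux k t.2.2)

/-- The counit of the path coalgebra: `ε(p) = δ_{|p|,0}`. -/
def εP : PathCoalg k V →ₗ[k] k :=
  Finsupp.lsum k fun t => if t.2.2.length = 0 then LinearMap.id else 0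

variable {G : Type*} [Group G]

/-- The multiplicative extension of an arrow weighting `δ : Q₁ → G` to paths:
`δ(a_n ⋯ a_1) = δ(a_n) ⋯ δ(a_1)`, with value `1` on length-zero paths. -/
def wt (δ : ∀ {a b : V}, (a ⟶ b) → G) : ∀ {a b : V}, Quiver.Path a b → G
  | _, _, .nil => 1
  | _, _, .cons p e => δ e * wt @δ p

/-- The underlying vector space of the smash coproduct coalgebra `kQ ⋊ kG`:
the free `k`-module on symbols `p ⋊ g`. -/
abbrev SmashCoalg (V : Type u) [Quiver.{v + 1} V] (G : Type*) : Type _ :=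
  (PathsIn V × G) →₀ k

/-- The basis vector `p ⋊ g`. -/
def ιs (t : PathsIn V × G) : SmashCoalg k V G := Finsupp.single t 1

/-- Appending the arrow `e` to the path component of basis vectors `p ⋊ g`
(for `p` ending at the source of `e`), leaving the group component unchanged. -/
def consMapS {b c : V} (e : b ⟶ c) : SmashCoalg k V G →ₗ[k] SmashCoalg k V G :=
  Finsupp.lsum k fun t =>
    if h : t.1.2.1 = b then Finsupp.lsingle (⟨t.1.1, c, (h ▸ t.1.2.2).cons e⟩, t.2) else 0

/-- The value of the smash comultiplication on the basis vector `p ⋊ g`: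
`Δ(p ⋊ g) = Σ_{p = rq} (r ⋊ δ(q)g) ⊗ (q ⋊ g)`, where `q` runs over initial
segments of `p` (including the trivial decompositions). -/
def smashDeltaAux (δ : ∀ {a b : V}, (a ⟶ b) → G) (g : G) :
    ∀ {a b : V}, Quiver.Path a b → SmashCoalg k V G ⊗[k] SmashCoalg k V G
  | a, _, .nil => ιs k (⟨a, a, .nil⟩, g) ⊗ₜ[k] ιs k (⟨a, a, .nil⟩, g)
  | a, c, .cons p e =>
      ιs k (⟨c, c, .nil⟩, wt @δ (p.cons e) * g) ⊗ₜ[k] ιs k (⟨a, c, p.cons e⟩, g)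
      + TensorProduct.map (consMapS k e) LinearMap.id (smashDeltaAux @δ g p)

/-- The comultiplication of the smash coproduct coalgebra `kQ ⋊ kG`. -/
def smashDelta (δ : ∀ {a b : V}, (a ⟶ b) → G) :
    SmashCoalg k V G →ₗ[k] SmashCoalg k V G ⊗[k] SmashCoalg k V G :=
  Finsupp.lsum k fun t => LinearMap.toSpanSingleton k _ (smashDeltaAux k @δ t.2 t.1.2.2)

/-- The counit of `kQ ⋊ kG`: `ε(p ⋊ g) = δ_{|p|,0}`. -/
def smashEps : SmashCoalg k V G →ₗ[k] k :=
  Finsupp.lsum k fun t => if t.1.2.2.length = 0 then LinearMap.id else 0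

/-- The canonical projection `kQ ⋊ kG → kQ`, `p ⋊ g ↦ p`. -/
def smashProj : SmashCoalg k V G →ₗ[k] PathCoalg k V :=
  Finsupp.lsum k fun t => Finsupp.lsingle t.1

/-- The linear embedding `kQ → kQ ⋊ kG`, `b ↦ b ⋊ g`. -/
def embG (g : G) : PathCoalg k V →ₗ[k] SmashCoalg k V G :=
  Finsupp.lsum k fun t => Finsupp.lsingle (t, g)

/-- The smash coproduct quiver `Q ⋊ G` attached to an arrow weighting
`δ : Q₁ → G`: vertices are pairs `x ⋊ g`. -/
structure SmashQ (V : Type u) [Quiver.{v + 1} V] (G : Type*) [Group G]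
    (δ : ∀ {a b : V}, (a ⟶ b) → G) where
  v : V
  g : G

/-- Arrows of `Q ⋊ G`: `a ⋊ g` goes from `s(a) ⋊ g` to `t(a) ⋊ δ(a)g`. -/
instance {δ : ∀ {a b : V}, (a ⟶ b) → G} : Quiver (SmashQ V G @δ) :=
  ⟨fun p q => {e : p.v ⟶ q.v // q.g = δ e * p.g}⟩

/-- The lift of a path `p` of `Q` to the smash coproduct quiver `Q ⋊ G`,
starting at `s(p) ⋊ g`; the endpoint is `t(p) ⋊ δ(p)g`. -/
def liftPath (δ : ∀ {a b : V}, (a ⟶ b) → G) :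
    ∀ {a b : V}, Quiver.Path a b → ∀ g : G,
      Σ h : G, Quiver.Path (SmashQ.mk a g : SmashQ V G @δ) (SmashQ.mk b h)
  | _, _, .nil, g => ⟨g, .nil⟩
  | _, _, .cons p e, g =>
      ⟨δ e * (liftPath @δ p g).1, (liftPath @δ p g).2.cons ⟨e, rfl⟩⟩

/-- The linear map `E : kQ ⋊ kG → k(Q ⋊ G)` sending the basis vector `p ⋊ g`
to the lift of `p` starting at `s(p) ⋊ g`. -/
def Emap (δ : ∀ {a b : V}, (a ⟶ b) → G) :
    SmashCoalg k V G →ₗ[k] PathCoalg k (SmashQ V G @δ) :=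
  Finsupp.lsum k fun t =>
    LinearMap.toSpanSingleton k _
      (ιp k ⟨SmashQ.mk t.1.1 t.2, SmashQ.mk t.1.2.1 (liftPath @δ t.1.2.2 t.2).1,
        (liftPath @δ t.1.2.2 t.2).2⟩)

/-! ### Auxiliary material for the proof -/

section Aux

variable {δ : ∀ {a b : V}, (a ⟶ b) → G}

lemma lift_nil (x : V) (g : G) :
    liftPath @δ (.nil (a := x)) g = ⟨g, .nil⟩ := by rw [liftPath]

lemma lift_cons {a b c : V} (p : Quiver.Path a b) (e : b ⟶ c) (g : G) :
    liftPath @δ (p.cons e) g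
      = ⟨δ e * (liftPath @δ p g).1, (liftPath @δ p g).2.cons ⟨e, rfl⟩⟩ := by rw [liftPath]

lemma wt_nil {x : V} : wt @δ (.nil (a := x)) = 1 := by rw [wt]

lemma wt_cons {a b c : V} (p : Quiver.Path a b) (e : b ⟶ c) :
    wt @δ (p.cons e) = δ e * wt @δ p := by rw [wt]

/-- Projection of a path of `Q ⋊ G` down to a path of `Q`. -/
def unlift : ∀ {x y : SmashQ V G @δ}, Quiver.Path x y → Quiver.Path x.v y.v
  | _, _, .nil => .nil
  | _, _, .cons p e => (unlift p).cons e.1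

lemma unlift_nil {x : SmashQ V G @δ} : unlift (.nil (a := x)) = .nil := by rw [unlift]

lemma unlift_cons {x y z : SmashQ V G @δ} (P : Quiver.Path x y) (E : y ⟶ z) :
    unlift (P.cons E) = (unlift P).cons E.1 := by rw [unlift]

lemma unlift_lift {a b : V} (q : Quiver.Path a b) (g : G) :
    unlift (δ := @δ) (liftPath @δ q g).2 = q := by
  induction q with
  | nil => rw [lift_nil]; exact unlift_nil
  | cons q e ih =>
      rw [lift_cons]
      dsimp only
      rw [unlift_cons, ih]

lemma lift_fst {a b : V} (q : Quiver.Path a b) (g : G) :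
    (liftPath @δ q g).1 = wt @δ q * g := by
  induction q with
  | nil => rw [lift_nil]; dsimp only; rw [wt_nil, one_mul]
  | cons q e ih =>
      rw [lift_cons]
      dsimp only
      rw [wt_cons, mul_assoc, ← ih]

lemma lift_len {a b : V} (q : Quiver.Path a b) (g : G) :
    (liftPath @δ q g).2.length = q.length := by
  induction q with
  | nil => rw [lift_nil]; rfl
  | cons q e ih =>
      rw [lift_cons]
      dsimp only
      rw [Quiver.Path.length_cons, Quiver.Path.length_cons, ih]

lemma cons_heq {W : Type*} [Quiver W] {a b b' c c' : W} (hb : b = b') (hc : c = c')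
    {p : Quiver.Path a b} {p' : Quiver.Path a b'} {e : b ⟶ c} {e' : b' ⟶ c'}
    (hp : HEq p p') (he : HEq e e') : HEq (p.cons e) (p'.cons e') := by
  subst hb; subst hc; cases hp; cases he; rfl

lemma hom_heq {m m' x x' : SmashQ V G @δ} (hm : m = m') (hx : x = x')
    (f : m ⟶ x) (f' : m' ⟶ x') (hf : HEq f.1 f'.1) : HEq f f' := by
  subst hm; subst hx; exact heq_of_eq (Subtype.ext (eq_of_heq hf))

lemma lift_unlift {a : V} {g : G} {x : SmashQ V G @δ}
    (P : Quiver.Path (SmashQ.mk a g : SmashQ V G @δ) x) :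
    (liftPath @δ (unlift P) g).1 = x.g ∧ HEq (liftPath @δ (unlift P) g).2 P := by
  induction P with
  | nil => rw [unlift_nil, lift_nil]; exact ⟨rfl, HEq.rfl⟩
  | @cons m x Q e ih =>
      obtain ⟨ih1, ih2⟩ := ih
      have h1 : δ e.1 * (liftPath @δ (unlift Q) g).1 = x.g := by rw [ih1, ← e.2]
      constructor
      · rw [unlift_cons, lift_cons]; exact h1
      · rw [unlift_cons, lift_cons]
        dsimp only
        refine cons_heq ?_ ?_ ih2 ?_
        · rw [ih1]
        · rw [h1]
        · exact hom_heq (V := V) (G := G) (δ := @δ)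
            (m := ⟨m.v, (liftPath @δ (unlift Q) g).1⟩) (m' := m)
            (x := ⟨x.v, δ e.1 * (liftPath @δ (unlift Q) g).1⟩) (x' := x)
            (by rw [ih1]) (by rw [h1]) _ _ HEq.rfl

/-- The bijection between basis indices underlying `E`. -/
def pathEquiv (δ : ∀ {a b : V}, (a ⟶ b) → G) :
    (PathsIn V × G) ≃ PathsIn (SmashQ V G @δ) where
  toFun t := ⟨SmashQ.mk t.1.1 t.2, SmashQ.mk t.1.2.1 (liftPath @δ t.1.2.2 t.2).1,
      (liftPath @δ t.1.2.2 t.2).2⟩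
  invFun s := (⟨s.1.v, s.2.1.v, unlift s.2.2⟩, s.1.g)
  left_inv t := by
    obtain ⟨⟨x, y, q⟩, g⟩ := t
    dsimp only
    rw [unlift_lift]
  right_inv s := by
    obtain ⟨⟨a, g⟩, y, P⟩ := s
    obtain ⟨h1, h2⟩ := lift_unlift (δ := @δ) P
    dsimp only
    refine Sigma.ext rfl (heq_of_eq (Sigma.ext ?_ h2))
    show SmashQ.mk y.v (liftPath @δ (unlift P) g).1 = y
    rw [h1]

set_option linter.unusedSectionVars false

lemma Emap_ιs (t : PathsIn V × G) :
    Emap k @δ (ιs k t)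
      = ιp k ⟨SmashQ.mk t.1.1 t.2, SmashQ.mk t.1.2.1 (liftPath @δ t.1.2.2 t.2).1,
          (liftPath @δ t.1.2.2 t.2).2⟩ := by
  rw [Emap, ιs, Finsupp.lsum_single, LinearMap.toSpanSingleton_apply, one_smul]

lemma Emap_ιs' (x y : V) (q : Quiver.Path x y) (h : G) :
    Emap k @δ (ιs k (⟨x, y, q⟩, h))
      = ιp k ⟨SmashQ.mk x h, SmashQ.mk y (liftPath @δ q h).1, (liftPath @δ q h).2⟩ :=
  Emap_ιs k _

lemma ΔP_ιp (t : PathsIn V) : ΔP k (ιp k t) = deltaAux k t.2.2 := by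
  rw [ΔP, ιp, Finsupp.lsum_single, LinearMap.toSpanSingleton_apply, one_smul]

lemma smashDelta_ιs (t : PathsIn V × G) :
    smashDelta k @δ (ιs k t) = smashDeltaAux k @δ t.2 t.1.2.2 := by
  rw [smashDelta, ιs, Finsupp.lsum_single, LinearMap.toSpanSingleton_apply, one_smul]

lemma εP_ιp (t : PathsIn V) :
    εP k (ιp k t) = if t.2.2.length = 0 then (1 : k) else 0 := by
  rw [εP, ιp, Finsupp.lsum_single]
  split_ifs <;> rfl

lemma smashEps_ιs (t : PathsIn V × G) :
    smashEps k (ιs k t) = if t.1.2.2.length = 0 then (1 : k) else 0 := by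
  rw [smashEps, ιs, Finsupp.lsum_single]
  split_ifs <;> rfl

lemma consMap_ιp {b c : V} (e : b ⟶ c) (t : PathsIn V) :
    consMap k e (ιp k t)
      = if h : t.2.1 = b then ιp k ⟨t.1, c, (h ▸ t.2.2).cons e⟩ else 0 := by
  rw [consMap, ιp, Finsupp.lsum_single]
  split_ifs with h
  · rw [Finsupp.lsingle_apply]; rfl
  · rfl

lemma consMapS_ιs {b c : V} (e : b ⟶ c) (t : PathsIn V × G) :
    consMapS k e (ιs k t)
      = if h : t.1.2.1 = b then ιs k (⟨t.1.1, c, (h ▸ t.1.2.2).cons e⟩, t.2) else 0 := by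
  rw [consMapS, ιs, Finsupp.lsum_single]
  split_ifs with h
  · rw [Finsupp.lsingle_apply]; rfl
  · rfl

lemma consMap_lift {b c : V} (e : b ⟶ c) (t : PathsIn V) (h u : G)
    (hu : (liftPath @δ t.2.2 h).1 = u) :
    consMap k (show (SmashQ.mk b u : SmashQ V G @δ) ⟶ SmashQ.mk c (δ e * u) from ⟨e, rfl⟩)
        (Emap k @δ (ιs k (t, h)))
      = Emap k @δ (consMapS k e (ιs k (t, h))) := by
  subst hu
  obtain ⟨x, y, q⟩ := t
  rw [Emap_ιs', consMap_ιp, consMapS_ιs]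
  by_cases hyb : y = b
  · subst hyb
    rw [dif_pos rfl, dif_pos rfl, Emap_ιs', lift_cons]
  · rw [dif_neg (fun hh => hyb (congrArg SmashQ.v hh)), dif_neg hyb, map_zero]

variable {M : Type*} [AddCommGroup M] [Module k M]

lemma smash_map_congr :
    ∀ {a b : V} (p : Quiver.Path a b) (g : G) (f f' : SmashCoalg k V G →ₗ[k] M),
      (∀ (t : PathsIn V) (h : G), wt @δ t.2.2 * h = wt @δ p * g →
          f (ιs k (t, h)) = f' (ιs k (t, h))) →
      TensorProduct.map f LinearMap.id (smashDeltaAux k @δ g p)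
        = TensorProduct.map f' LinearMap.id (smashDeltaAux k @δ g p)
  | a, _, .nil, g, f, f', H => by
      rw [smashDeltaAux, TensorProduct.map_tmul, TensorProduct.map_tmul,
        H ⟨a, a, .nil⟩ g rfl]
  | a, c, .cons (b := b) p e, g, f, f', H => by
      rw [smashDeltaAux, map_add, map_add, TensorProduct.map_tmul, TensorProduct.map_tmul,
        H ⟨c, c, .nil⟩ (wt @δ (p.cons e) * g) (by rw [wt_nil, one_mul])]
      congr 1
      rw [← LinearMap.comp_apply, ← LinearMap.comp_apply,
        ← TensorProduct.map_comp, ← TensorProduct.map_comp, LinearMap.id_comp]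
      refine smash_map_congr p g _ _ ?_
      intro t h ht
      obtain ⟨x, y, q⟩ := t
      rw [LinearMap.comp_apply, LinearMap.comp_apply, consMapS_ιs]
      by_cases hyb : y = b
      · subst hyb
        rw [dif_pos rfl]
        exact H ⟨x, c, q.cons e⟩ h
          (by rw [wt_cons, wt_cons, mul_assoc, mul_assoc, ht])
      · rw [dif_neg hyb, map_zero, map_zero]

lemma delta_lift : ∀ {a b : V} (p : Quiver.Path a b) (g : G),
    deltaAux k (liftPath @δ p g).2
      = TensorProduct.map (Emap k @δ) (Emap k @δ) (smashDeltaAux k @δ g p)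
  | a, _, .nil, g => by
      rw [lift_nil]
      dsimp only
      rw [deltaAux, smashDeltaAux, TensorProduct.map_tmul, Emap_ιs', lift_nil]
  | a, c, .cons (b := b) p e, g => by
      rw [lift_cons]
      dsimp only
      rw [deltaAux, smashDeltaAux, map_add, TensorProduct.map_tmul, Emap_ιs', Emap_ιs',
        lift_nil, lift_cons]
      have hf : wt @δ (p.cons e) * g = δ e * (liftPath @δ p g).1 := by
        rw [lift_fst, wt_cons, mul_assoc]
      congr 1
      · rw [hf]
      · rw [delta_lift p g, ← LinearMap.comp_apply, ← LinearMap.comp_apply,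
          ← TensorProduct.map_comp, ← TensorProduct.map_comp,
          LinearMap.id_comp, LinearMap.comp_id]
        have e4 : ∀ F : SmashCoalg k V G →ₗ[k] PathCoalg k (SmashQ V G @δ),
            TensorProduct.map F (Emap k @δ)
              = (TensorProduct.map LinearMap.id (Emap k @δ)).comp
                  (TensorProduct.map F LinearMap.id) := by
          intro F
          rw [← TensorProduct.map_comp, LinearMap.id_comp, LinearMap.comp_id]
        rw [e4, e4, LinearMap.comp_apply, LinearMap.comp_apply]
        congr 1
        refine smash_map_congr k p g _ _ ?_
        intro t h ht
        rw [LinearMap.comp_apply, LinearMap.comp_apply]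
        exact consMap_lift k e t h _ (by rw [lift_fst, ht, ← lift_fst])

end Aux

/-- The map `E : kQ ⋊ kG → k(Q ⋊ G)`, sending `p ⋊ g` (for
`p = a_n ⋯ a_1`) to the path `(a_n ⋊ δ(a_{n-1}⋯a_1)g) ⋯ (a₂ ⋊ δ(a₁)g)(a₁ ⋊ g)`
of the smash coproduct quiver, is an isomorphism of coalgebras. -/
theorem smash_coalgebra_iso_path_coalgebra (δ : ∀ {a b : V}, (a ⟶ b) → G) :
    Function.Bijective (Emap k @δ)
    ∧ (∀ x : SmashCoalg k V G,
        ΔP k (Emap k @δ x)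
          = TensorProduct.map (Emap k @δ) (Emap k @δ) (smashDelta k @δ x))
    ∧ (∀ x : SmashCoalg k V G, εP k (Emap k @δ x) = smashEps k x) := by
  refine ⟨?_, ?_, ?_⟩
  · -- bijectivity
    have hE : Emap k @δ = Finsupp.lmapDomain k k (pathEquiv @δ) := by
      apply Finsupp.lhom_ext
      intro t b
      rw [Finsupp.lmapDomain_apply, Finsupp.mapDomain_single]
      rw [Emap, Finsupp.lsum_single, LinearMap.toSpanSingleton_apply, ιp,
        Finsupp.smul_single, smul_eq_mul, mul_one]
      rfl
    rw [hE]
    have hcoe : ⇑(Finsupp.lmapDomain k k (pathEquiv (δ := @δ)))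
        = ⇑(Finsupp.equivCongrLeft (M := k) (pathEquiv (δ := @δ))) := by
      funext x
      rw [Finsupp.lmapDomain_apply, ← Finsupp.equivMapDomain_eq_mapDomain]
      rfl
    rw [hcoe]
    exact (Finsupp.equivCongrLeft _).bijective
  · -- comultiplication
    have h2 : (ΔP k).comp (Emap k @δ)
        = (TensorProduct.map (Emap k @δ) (Emap k @δ)).comp (smashDelta k @δ) := by
      apply Finsupp.lhom_ext
      intro t b
      rw [LinearMap.comp_apply, LinearMap.comp_apply]
      have hsingle : (Finsupp.single t b : SmashCoalg k V G) = b • ιs k t := by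
        rw [ιs, Finsupp.smul_single, smul_eq_mul, mul_one]
      rw [hsingle, map_smul, map_smul, map_smul, map_smul]
      congr 1
      rw [Emap_ιs, ΔP_ιp, smashDelta_ιs]
      exact delta_lift k t.1.2.2 t.2
    intro x
    exact LinearMap.congr_fun h2 x
  · -- counit
    have h3 : (εP k).comp (Emap k @δ) = smashEps k := by
      apply Finsupp.lhom_ext
      intro t b
      rw [LinearMap.comp_apply]
      have hsingle : (Finsupp.single t b : SmashCoalg k V G) = b • ιs k t := by
        rw [ιs, Finsupp.smul_single, smul_eq_mul, mul_one]
      rw [hsingle, map_smul, map_smul, map_smul]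
      congr 1
      rw [Emap_ιs, εP_ιp, smashEps_ιs]
      show (if (liftPath @δ t.1.2.2 t.2).2.length = 0 then (1 : k) else 0) = _
      rw [lift_len]
    intro x
    exact LinearMap.congr_fun h3 x
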